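/- Let G be a finite connected simple undirected graph with normalized Laplacian eigenvalues 0 = λ_0 < λ_1 ≤ … ≤ λ_{n−1}, maximum degree Δ and minimum degree δ. Then for any two vertices u and v, DSD_2(u,v) ≤ (√2/λ_1) √(Δ/δ). -/

import Mathlib

set_option maxHeartbeats 1600000 in
/-- For a finite connected simple graph `G` with normalized Laplacian
eigenvalues `0 = λ_0 < λ_1 ≤ … ≤ λ_{n−1}`, maximum degree `Δ` and minimum degree `δ`, any two
vertices `u, v` satisfy `DSD_2(u,v) ≤ (√2/λ_1) √(Δ/δ)`. -/
theorem dsd_two_le_spectral_bound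
    (n : ℕ) [NeZero n] (hn : 2 ≤ n)
    (G : SimpleGraph (Fin n)) [DecidableRel G.Adj]
    (hconn : G.Connected)
    -- eigenvalues and orthonormal eigenbasis of `𝓛 = I − D^{−1/2} A D^{−1/2}`
    (lam : Fin n → ℝ) (φ : Fin n → Fin n → ℝ)
    (heig : ∀ l, Matrix.mulVec
        (1 - (Matrix.diagonal fun i => (Real.sqrt (G.degree i))⁻¹) * G.adjMatrix ℝ
           * (Matrix.diagonal fun i => (Real.sqrt (G.degree i))⁻¹)) (φ l)
      = lam l • φ l)
    (horth : ∀ l m, (∑ i, φ l i * φ m i) = if l = m then (1 : ℝ) else 0)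
    (hmono : Monotone lam) (hlam0 : lam 0 = 0) (hlam1 : 0 < lam 1)
    -- the Green's function `𝔾` of `G`
    (𝔾 : Matrix (Fin n) (Fin n) ℝ)
    (hG1 : ∀ x y : Fin n,
      (𝔾 * (1 - (Matrix.diagonal fun i => ((G.degree i : ℝ))⁻¹) * G.adjMatrix ℝ)) x y
        = (if x = y then (1 : ℝ) else 0) - (G.degree y : ℝ) / ∑ i, (G.degree i : ℝ))
    (hG2 : ∀ x : Fin n, ∑ y, 𝔾 x y = 0)
    (u v : Fin n) :
    Real.sqrt (∑ j, (𝔾 u j - 𝔾 v j) ^ 2)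
      ≤ (Real.sqrt 2 / lam 1) * Real.sqrt
          ((Finset.univ.sup' Finset.univ_nonempty (fun i => G.degree i) : ℝ)
            / (Finset.univ.inf' Finset.univ_nonempty (fun i => G.degree i) : ℝ)) := by
  classical
  -- abbreviations
  set s : Fin n → ℝ := fun i => Real.sqrt (G.degree i) with hs_def
  set d : Fin n → ℝ := fun i => (G.degree i : ℝ) with hd_def
  set L : Matrix (Fin n) (Fin n) ℝ :=
    1 - (Matrix.diagonal fun i => (Real.sqrt (G.degree i))⁻¹) * G.adjMatrix ℝ
       * (Matrix.diagonal fun i => (Real.sqrt (G.degree i))⁻¹) with hL_def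
  set M : Matrix (Fin n) (Fin n) ℝ :=
    1 - (Matrix.diagonal fun i => ((G.degree i : ℝ))⁻¹) * G.adjMatrix ℝ with hM_def
  set vol : ℝ := ∑ i, (G.degree i : ℝ) with hvol_def
  -- positivity of degrees
  have hdeg : ∀ i : Fin n, 0 < G.degree i := by
    intro i
    rw [G.degree_pos_iff_exists_adj i]
    obtain ⟨j, hj⟩ := Fintype.exists_ne_of_one_lt_card (by rw [Fintype.card_fin]; omega) i
    obtain ⟨w⟩ := hconn i j
    exact ⟨w.getVert 1, w.adj_snd (SimpleGraph.Walk.not_nil_of_ne hj.symm)⟩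
  have hdpos : ∀ i, 0 < d i := by
    intro i
    simp only [hd_def]
    exact_mod_cast hdeg i
  have hspos : ∀ i, 0 < s i := fun i => Real.sqrt_pos.mpr (by exact_mod_cast hdeg i)
  have hsne : ∀ i, s i ≠ 0 := fun i => (hspos i).ne'
  have hs_sq : ∀ i, s i * s i = d i := fun i => Real.mul_self_sqrt (hdpos i).le
  have hdapp : ∀ i, ((G.degree i : ℕ) : ℝ) = d i := fun i => rfl
  have hvolpos : 0 < vol := by
    rw [hvol_def]
    apply Finset.sum_pos (fun i _ => by exact_mod_cast hdeg i) Finset.univ_nonempty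
  -- entrywise formulas
  have hLapp : ∀ x y, L x y
      = (if x = y then 1 else 0) - (s x)⁻¹ * (G.adjMatrix ℝ x y) * (s y)⁻¹ := by
    intro x y
    rw [hL_def, Matrix.sub_apply, Matrix.one_apply, Matrix.mul_diagonal, Matrix.diagonal_mul]
  have hMapp : ∀ x y, M x y
      = (if x = y then 1 else 0) - (d x)⁻¹ * (G.adjMatrix ℝ x y) := by
    intro x y
    rw [hM_def, Matrix.sub_apply, Matrix.one_apply, Matrix.diagonal_mul]
  have hAsymm : ∀ x y, G.adjMatrix ℝ x y = G.adjMatrix ℝ y x := by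
    intro x y
    rw [← Matrix.transpose_apply (G.adjMatrix ℝ), SimpleGraph.transpose_adjMatrix]
  have hLsymm : ∀ x y, L x y = L y x := by
    intro x y
    rw [hLapp, hLapp, hAsymm]
    rcases eq_or_ne x y with rfl | hxy
    · ring
    · rw [if_neg hxy, if_neg (Ne.symm hxy)]; ring
  -- row sums of the adjacency matrix
  have hArow : ∀ x, (∑ y, G.adjMatrix ℝ x y) = d x := by
    intro x
    simp only [SimpleGraph.adjMatrix_apply, Finset.sum_boole, hd_def]
    congr 1
    simp [SimpleGraph.degree, SimpleGraph.neighborFinset_eq_filter]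
  -- L kills the square-root-degree vector
  have hLs : L.mulVec s = 0 := by
    funext x
    have h1 : ∀ y, L x y * s y
        = (if x = y then s y else 0) - (s x)⁻¹ * (G.adjMatrix ℝ x y) := by
      intro y
      rw [hLapp, sub_mul, ite_mul, one_mul, zero_mul, mul_assoc, mul_assoc,
        inv_mul_cancel₀ (hsne y), mul_one]
    have h2 : (L.mulVec s) x = s x - (s x)⁻¹ * d x := by
      simp only [Matrix.mulVec, dotProduct, h1, Finset.sum_sub_distrib,
        Finset.sum_ite_eq, Finset.mem_univ, if_pos, ← Finset.mul_sum, hArow]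
    rw [h2, ← hs_sq x]
    have := hsne x
    field_simp
    simp
  -- dual orthonormality (Parseval)
  have horth2 : ∀ i j : Fin n, (∑ l, φ l i * φ l j) = if i = j then (1 : ℝ) else 0 := by
    have hPPt : (Matrix.of φ) * (Matrix.of φ).transpose = 1 := by
      ext l m
      simp [Matrix.mul_apply, Matrix.one_apply, horth l m]
    have hPtP := mul_eq_one_comm.mp hPPt
    intro i j
    have := congrFun (congrFun hPtP i) j
    simpa [Matrix.mul_apply, Matrix.one_apply, mul_comm] using this
  -- positive eigenvalues
  have hone_le : ∀ l : Fin n, l ≠ 0 → (1 : Fin n) ≤ l := by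
    intro l hl
    have h1 : ((1 : Fin n) : ℕ) = 1 % n := Fin.val_one' n
    have : ((1 : Fin n) : ℕ) = 1 := by rw [h1, Nat.mod_eq_of_lt (by omega)]
    rw [Fin.le_def, this]
    have : (l : ℕ) ≠ 0 := fun h => hl (Fin.ext (by simpa using h))
    omega
  have hlampos : ∀ l : Fin n, l ≠ 0 → 0 < lam l :=
    fun l hl => lt_of_lt_of_le hlam1 (hmono (hone_le l hl))
  -- s is orthogonal to φ l for l ≠ 0
  have hψorth : ∀ l, l ≠ 0 → (∑ i, s i * φ l i) = 0 := by
    intro l hl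
    have key : lam l * ∑ i, s i * φ l i = 0 := by
      have e1 : lam l * ∑ i, s i * φ l i = ∑ i, s i * (L.mulVec (φ l)) i := by
        rw [heig l, Finset.mul_sum]
        exact Finset.sum_congr rfl fun i _ => by simp [Pi.smul_apply, smul_eq_mul]; ring
      have e2 : ∑ i, s i * (L.mulVec (φ l)) i = ∑ j, (L.mulVec s) j * φ l j := by
        simp only [Matrix.mulVec, dotProduct, Finset.mul_sum, Finset.sum_mul]
        rw [Finset.sum_comm]
        exact Finset.sum_congr rfl fun j _ => Finset.sum_congr rfl fun i _ => by
          rw [hLsymm i j]; ring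
      rw [e1, e2, hLs]
      simp
    exact (mul_eq_zero.mp key).resolve_left (hlampos l hl).ne'
  -- φ 0 is proportional to s
  set c : ℝ := ∑ i, s i * φ 0 i with hc_def
  have hphi0 : ∀ i, c * φ 0 i = s i := by
    intro i
    have h1 : ∑ l, (∑ j, s j * φ l j) * φ l i = c * φ 0 i := by
      rw [Finset.sum_eq_single 0]
      · intro l _ hl; rw [hψorth l hl, zero_mul]
      · intro h; exact absurd (Finset.mem_univ 0) h
    rw [← h1]
    have h2 : ∑ l, (∑ j, s j * φ l j) * φ l i = ∑ j, s j * (∑ l, φ l j * φ l i) := by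
      simp only [Finset.sum_mul, Finset.mul_sum]
      rw [Finset.sum_comm]
      exact Finset.sum_congr rfl fun j _ => Finset.sum_congr rfl fun l _ => by ring
    rw [h2]
    simp [horth2]
  have hcne : c ≠ 0 := by
    intro hc
    exact (hsne u) (by rw [← hphi0 u, hc, zero_mul])
  have hφ0 : ∀ i, φ 0 i = c⁻¹ * s i := by
    intro i
    rw [← hphi0 i, ← mul_assoc, inv_mul_cancel₀ hcne, one_mul]
  -- the conjugated Green's function H
  set H : Matrix (Fin n) (Fin n) ℝ := Matrix.of fun x y => s x * 𝔾 x y * (s y)⁻¹ with hH_def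
  have hHapp : ∀ x y, H x y = s x * 𝔾 x y * (s y)⁻¹ := fun x y => rfl
  have hds : ∀ y, d y * (s y)⁻¹ = s y := by
    intro y
    rw [← hs_sq y, mul_assoc, mul_inv_cancel₀ (hsne y), mul_one]
  -- H * L = I − s sᵀ / vol
  have hHL : ∀ x y, (H * L) x y = (if x = y then (1 : ℝ) else 0) - s x * s y / vol := by
    intro x y
    have hkey : ∀ k, (s k)⁻¹ * L k y = M k y * (s y)⁻¹ := by
      intro k
      rw [hLapp, hMapp, mul_sub, sub_mul]
      congr 1
      · rcases eq_or_ne k y with rfl | h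
        · simp
        · simp [h]
      · rw [← hs_sq k, mul_inv]
        ring
    have e1 : (H * L) x y = s x * ((𝔾 * M) x y) * (s y)⁻¹ := by
      rw [Matrix.mul_apply, Matrix.mul_apply, Finset.mul_sum, Finset.sum_mul]
      refine Finset.sum_congr rfl fun k _ => ?_
      rw [hHapp, mul_assoc (s x * 𝔾 x k), hkey k]
      ring
    rw [e1, hG1 x y]
    simp only [hdapp]
    rcases eq_or_ne x y with rfl | hxy
    · rw [if_pos rfl, ← hs_sq x]
      field_simp [hsne x, hvolpos.ne']
    · rw [if_neg hxy, ← hs_sq y]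
      field_simp [hsne y, hvolpos.ne']
      ring
  -- action of H on the eigenbasis
  have hH0 : ∀ x, (∑ y, H x y * φ 0 y) = 0 := by
    intro x
    have h1 : ∀ y, H x y * φ 0 y = (s x * c⁻¹) * 𝔾 x y := by
      intro y
      calc H x y * φ 0 y = (s x * c⁻¹) * 𝔾 x y * ((s y)⁻¹ * s y) := by
            rw [hHapp, hφ0 y]; ring
        _ = (s x * c⁻¹) * 𝔾 x y := by rw [inv_mul_cancel₀ (hsne y), mul_one]
    simp only [h1, ← Finset.mul_sum, hG2 x, mul_zero]
  have hHl : ∀ l, l ≠ 0 → ∀ x, (∑ y, H x y * φ l y) = (lam l)⁻¹ * φ l x := by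
    intro l hl x
    have e1 : ((H * L).mulVec (φ l)) x = φ l x := by
      have : ∀ y, (H * L) x y * φ l y
          = (if x = y then φ l y else 0) - (s x / vol) * (s y * φ l y) := by
        intro y
        rw [hHL, sub_mul, ite_mul, one_mul, zero_mul]
        congr 1
        ring
      simp only [Matrix.mulVec, dotProduct, this, Finset.sum_sub_distrib,
        Finset.sum_ite_eq, Finset.mem_univ, if_pos, ← Finset.mul_sum]
      have : ∑ y, s y * φ l y = 0 := hψorth l hl
      rw [this, mul_zero, sub_zero]
    have e2 : ((H * L).mulVec (φ l)) x = lam l * ∑ y, H x y * φ l y := by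
      rw [← Matrix.mulVec_mulVec, heig l]
      simp only [Matrix.mulVec, dotProduct, Pi.smul_apply, smul_eq_mul,
        Finset.mul_sum]
      exact Finset.sum_congr rfl fun y _ => by ring
    have h3 := e2.symm.trans e1
    rw [eq_inv_mul_iff_mul_eq₀ (hlampos l hl).ne']
    exact h3
  -- the row-difference vector and its conjugate
  set z : Fin n → ℝ := fun j => (𝔾 u j - 𝔾 v j) * (s j)⁻¹ with hz_def
  have hz : ∀ j, z j = (s u)⁻¹ * H u j - (s v)⁻¹ * H v j := by
    intro j
    have e : ∀ wv : Fin n, (s wv)⁻¹ * H wv j = 𝔾 wv j * (s j)⁻¹ := by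
      intro wv
      calc (s wv)⁻¹ * H wv j = ((s wv)⁻¹ * s wv) * (𝔾 wv j * (s j)⁻¹) := by
            rw [hHapp]; ring
        _ = 𝔾 wv j * (s j)⁻¹ := by rw [inv_mul_cancel₀ (hsne wv), one_mul]
    rw [e u, e v]
    show (𝔾 u j - 𝔾 v j) * (s j)⁻¹ = _
    ring
  set a : Fin n → ℝ := fun l => (s u)⁻¹ * φ l u - (s v)⁻¹ * φ l v with ha_def
  set coef : Fin n → ℝ := fun l => ∑ j, z j * φ l j with hcoef_def
  have hcoef0 : coef 0 = 0 := by
    simp only [hcoef_def]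
    have : ∀ j, z j * φ 0 j = (s u)⁻¹ * (H u j * φ 0 j) - (s v)⁻¹ * (H v j * φ 0 j) := by
      intro j; rw [hz j]; ring
    simp only [this, Finset.sum_sub_distrib, ← Finset.mul_sum, hH0, mul_zero, sub_zero,
      sub_self]
  have hcoefl : ∀ l, l ≠ 0 → coef l = (lam l)⁻¹ * a l := by
    intro l hl
    simp only [hcoef_def]
    have : ∀ j, z j * φ l j = (s u)⁻¹ * (H u j * φ l j) - (s v)⁻¹ * (H v j * φ l j) := by
      intro j; rw [hz j]; ring
    simp only [this, Finset.sum_sub_distrib, ← Finset.mul_sum, hHl l hl, ha_def]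
    ring
  -- completeness expansion of z
  have hzexp : ∀ j, z j = ∑ l, coef l * φ l j := by
    intro j
    have : ∑ l, coef l * φ l j = ∑ k, z k * (∑ l, φ l k * φ l j) := by
      simp only [hcoef_def, Finset.sum_mul, Finset.mul_sum]
      rw [Finset.sum_comm]
      exact Finset.sum_congr rfl fun k _ => Finset.sum_congr rfl fun l _ => by ring
    rw [this]
    simp [horth2]
  -- Parseval for z
  have hsumz : (∑ j, z j ^ 2) = ∑ l, coef l ^ 2 := by
    calc ∑ j, z j ^ 2 = ∑ j, (∑ l, coef l * φ l j) * z j := by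
          exact Finset.sum_congr rfl fun j _ => by rw [← hzexp j]; ring
      _ = ∑ l, coef l * (∑ j, z j * φ l j) := by
          simp only [Finset.sum_mul, Finset.mul_sum]
          rw [Finset.sum_comm]
          exact Finset.sum_congr rfl fun l _ => Finset.sum_congr rfl fun j _ => by ring
      _ = ∑ l, coef l ^ 2 := Finset.sum_congr rfl fun l _ => by
          rw [show (∑ j, z j * φ l j) = coef l from rfl]; ring
  -- Parseval for a
  set yv : Fin n → ℝ := fun x =>
    (if x = u then (s u)⁻¹ else 0) - (if x = v then (s v)⁻¹ else 0) with hyv_def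
  have hyva : ∀ l, a l = ∑ x, yv x * φ l x := by
    intro l
    simp only [hyv_def, sub_mul, ite_mul, zero_mul, Finset.sum_sub_distrib,
      Finset.sum_ite_eq', Finset.mem_univ, if_pos, ha_def]
  have hyvexp : ∀ x, yv x = ∑ l, a l * φ l x := by
    intro x
    have : ∑ l, a l * φ l x = ∑ k, yv k * (∑ l, φ l k * φ l x) := by
      simp only [hyva, Finset.sum_mul, Finset.mul_sum]
      rw [Finset.sum_comm]
      exact Finset.sum_congr rfl fun k _ => Finset.sum_congr rfl fun l _ => by ring
    rw [this]
    simp [horth2]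
  have hsuma : (∑ l, a l ^ 2) = ∑ x, yv x ^ 2 := by
    calc ∑ l, a l ^ 2 = ∑ l, a l * (∑ x, yv x * φ l x) := by
          exact Finset.sum_congr rfl fun l _ => by rw [← hyva l]; ring
      _ = ∑ x, (∑ l, a l * φ l x) * yv x := by
          simp only [Finset.sum_mul, Finset.mul_sum]
          rw [Finset.sum_comm]
          exact Finset.sum_congr rfl fun l _ => Finset.sum_congr rfl fun x _ => by ring
      _ = ∑ x, yv x ^ 2 := Finset.sum_congr rfl fun x _ => by rw [← hyvexp x]; ring
  -- bound on ∑ yv²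
  have hyv_bound : (∑ x, yv x ^ 2) ≤ (d u)⁻¹ + (d v)⁻¹ := by
    have h1 : ∀ x, yv x ^ 2
        ≤ (if x = u then (s u)⁻¹ else 0) ^ 2 + (if x = v then (s v)⁻¹ else 0) ^ 2 := by
      intro x
      have hp : (0:ℝ) ≤ (if x = u then (s u)⁻¹ else 0) := by positivity
      have hq : (0:ℝ) ≤ (if x = v then (s v)⁻¹ else 0) := by positivity
      simp only [hyv_def]
      nlinarith [mul_nonneg hp hq]
    calc (∑ x, yv x ^ 2)
        ≤ ∑ x, ((if x = u then (s u)⁻¹ else 0) ^ 2 + (if x = v then (s v)⁻¹ else 0) ^ 2) :=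
          Finset.sum_le_sum fun x _ => h1 x
      _ = (d u)⁻¹ + (d v)⁻¹ := by
          rw [Finset.sum_add_distrib]
          have e1 : ∀ (w : Fin n), (∑ x, (if x = w then (s w)⁻¹ else 0) ^ 2) = (d w)⁻¹ := by
            intro w
            rw [Finset.sum_eq_single w]
            · rw [if_pos rfl, ← hs_sq w, mul_inv, sq]
            · intro x _ hx; rw [if_neg hx]; ring
            · intro h; exact absurd (Finset.mem_univ w) h
          rw [e1 u, e1 v]
  -- coef bound
  have hcoef_bound : ∀ l, coef l ^ 2 ≤ (lam 1)⁻¹ ^ 2 * a l ^ 2 := by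
    intro l
    rcases eq_or_ne l 0 with rfl | hl
    · rw [hcoef0]
      have h0 : (0:ℝ) ≤ (lam 1)⁻¹ ^ 2 * a 0 ^ 2 := by positivity
      simpa using h0
    · rw [hcoefl l hl, mul_pow]
      have h1 : (lam l)⁻¹ ≤ (lam 1)⁻¹ :=
        inv_anti₀ hlam1 (hmono (hone_le l hl))
      have h2 : (0:ℝ) ≤ (lam l)⁻¹ := inv_nonneg.mpr (hlampos l hl).le
      have : (lam l)⁻¹ ^ 2 ≤ (lam 1)⁻¹ ^ 2 := by nlinarith
      nlinarith [sq_nonneg (a l), sq_nonneg ((lam l)⁻¹)]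
  -- extreme degrees
  set Δr : ℝ := Finset.univ.sup' Finset.univ_nonempty d with hΔ_def
  set δr : ℝ := Finset.univ.inf' Finset.univ_nonempty d with hδ_def
  have hδpos : 0 < δr := by
    obtain ⟨i, _, hi⟩ := Finset.exists_mem_eq_inf' Finset.univ_nonempty d
    rw [hδ_def, hi]
    exact hdpos i
  have hd_le_Δ : ∀ j, d j ≤ Δr :=
    fun j => Finset.le_sup' d (Finset.mem_univ j)
  have hδ_le_d : ∀ j, δr ≤ d j :=
    fun j => Finset.inf'_le d (Finset.mem_univ j)
  have hΔpos : 0 < Δr := lt_of_lt_of_le hδpos (le_trans (hδ_le_d u) (hd_le_Δ u))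
  -- the main chain of inequalities
  have hw_eq : ∀ j, (𝔾 u j - 𝔾 v j) ^ 2 = z j ^ 2 * d j := by
    intro j
    have : 𝔾 u j - 𝔾 v j = z j * s j := by
      simp only [hz_def]
      rw [mul_assoc, inv_mul_cancel₀ (hsne j), mul_one]
    rw [this, mul_pow, sq (s j), hs_sq j]
  have hzsq_nonneg : ∀ j, (0:ℝ) ≤ z j ^ 2 := fun j => sq_nonneg _
  have main : (∑ j, (𝔾 u j - 𝔾 v j) ^ 2) ≤ 2 / lam 1 ^ 2 * (Δr / δr) := by
    have b1 : (∑ j, (𝔾 u j - 𝔾 v j) ^ 2) ≤ Δr * ∑ j, z j ^ 2 := by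
      rw [Finset.mul_sum]
      refine Finset.sum_le_sum fun j _ => ?_
      rw [hw_eq j, mul_comm (Δr)]
      exact mul_le_mul_of_nonneg_left (hd_le_Δ j) (hzsq_nonneg j)
    have b2 : (∑ j, z j ^ 2) ≤ (lam 1)⁻¹ ^ 2 * ((d u)⁻¹ + (d v)⁻¹) := by
      rw [hsumz]
      calc ∑ l, coef l ^ 2 ≤ ∑ l, (lam 1)⁻¹ ^ 2 * a l ^ 2 :=
            Finset.sum_le_sum fun l _ => hcoef_bound l
        _ = (lam 1)⁻¹ ^ 2 * ∑ l, a l ^ 2 := by rw [Finset.mul_sum]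
        _ ≤ (lam 1)⁻¹ ^ 2 * ((d u)⁻¹ + (d v)⁻¹) := by
            apply mul_le_mul_of_nonneg_left _ (by positivity)
            rw [hsuma]
            exact hyv_bound
    have b3 : (d u)⁻¹ + (d v)⁻¹ ≤ 2 / δr := by
      have hu : (d u)⁻¹ ≤ δr⁻¹ := inv_anti₀ hδpos (hδ_le_d u)
      have hv : (d v)⁻¹ ≤ δr⁻¹ := inv_anti₀ hδpos (hδ_le_d v)
      rw [div_eq_mul_inv]
      linarith
    calc (∑ j, (𝔾 u j - 𝔾 v j) ^ 2) ≤ Δr * ∑ j, z j ^ 2 := b1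
      _ ≤ Δr * ((lam 1)⁻¹ ^ 2 * ((d u)⁻¹ + (d v)⁻¹)) := by
          apply mul_le_mul_of_nonneg_left b2 hΔpos.le
      _ ≤ Δr * ((lam 1)⁻¹ ^ 2 * (2 / δr)) := by
          apply mul_le_mul_of_nonneg_left _ hΔpos.le
          exact mul_le_mul_of_nonneg_left b3 (by positivity)
      _ = 2 / lam 1 ^ 2 * (Δr / δr) := by
          field_simp
  calc Real.sqrt (∑ j, (𝔾 u j - 𝔾 v j) ^ 2)
      ≤ Real.sqrt (2 / lam 1 ^ 2 * (Δr / δr)) := Real.sqrt_le_sqrt main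
    _ = (Real.sqrt 2 / lam 1) * Real.sqrt (Δr / δr) := by
        rw [Real.sqrt_mul (by positivity), Real.sqrt_div (by norm_num : (0:ℝ) ≤ 2),
          Real.sqrt_sq hlam1.le]
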